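/- Suppose f is l-smooth jointly and μ-strongly concave in y with Φ(x) := max_y f(x,y) and ∇Φ(x) = ∇_x f(x,y*(x)), κ = l/μ. Then for all (x,y): ‖∇_x f(x,y)‖² ≤ 2‖∇Φ(x)‖² + 4lκ(Φ(x) − f(x,y)). -/

import Mathlib

open scoped RealInnerProductSpace

noncomputable def gradx {d : ℕ}
    (f : EuclideanSpace ℝ (Fin d) → EuclideanSpace ℝ (Fin d) → ℝ)
    (x y : EuclideanSpace ℝ (Fin d)) : EuclideanSpace ℝ (Fin d) :=
  gradient (fun x' => f x' y) x

noncomputable def grady {d : ℕ}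
    (f : EuclideanSpace ℝ (Fin d) → EuclideanSpace ℝ (Fin d) → ℝ)
    (x y : EuclideanSpace ℝ (Fin d)) : EuclideanSpace ℝ (Fin d) :=
  gradient (f x) y

/-- Quadratic growth for a strongly concave function at its maximizer. -/
lemma quad_growth {d : ℕ} (μ : ℝ)
    (g : EuclideanSpace ℝ (Fin d) → ℝ)
    (hdg : Differentiable ℝ g)
    (hconc : ConcaveOn ℝ Set.univ (fun y => g y + (μ / 2) * ‖y‖ ^ 2))
    (ys : EuclideanSpace ℝ (Fin d))
    (hmax : IsMaxOn g Set.univ ys)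
    (y : EuclideanSpace ℝ (Fin d)) :
    g y + (μ / 2) * ‖y - ys‖ ^ 2 ≤ g ys := by
  rcases eq_or_ne y ys with rfl | hne
  · simp
  set v := y - ys with hv
  -- the function restricted to the line through ys and y
  set c : ℝ → EuclideanSpace ℝ (Fin d) := fun t => ys + t • v with hc
  set φ : ℝ → ℝ := fun t => g (c t) + (μ / 2) * ‖c t‖ ^ 2 with hφ
  have hfd0 : fderiv ℝ g ys = 0 := by
    have hlm : IsLocalMax g ys := hmax.filter_mono (by simp [Filter.le_principal_iff])
    exact hlm.fderiv_eq_zero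
  -- derivative of c
  have hcderiv : ∀ t : ℝ, HasDerivAt c v t := by
    intro t
    have := ((hasDerivAt_id t).smul_const v).const_add ys
    rw [one_smul] at this
    exact this
  -- derivative of first part at 0
  have h1 : HasDerivAt (fun t => g (c t)) 0 0 := by
    have := ((hdg (c 0)).hasFDerivAt).comp_hasDerivAt 0 (hcderiv 0)
    have hc0 : c 0 = ys := by simp [hc]
    rw [hc0, hfd0] at this
    exact this
  -- rewrite the norm-squared part
  have hnorm : ∀ t : ℝ, ‖c t‖ ^ 2 = ‖ys‖ ^ 2 + 2 * ⟪ys, v⟫ * t + ‖v‖ ^ 2 * t ^ 2 := by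
    intro t
    have := norm_add_sq_real ys (t • v)
    rw [hc]
    simp only [this, real_inner_smul_right, norm_smul, Real.norm_eq_abs, mul_pow, sq_abs]
    ring
  have h2 : HasDerivAt (fun t => (μ / 2) * ‖c t‖ ^ 2) (μ * ⟪ys, v⟫) 0 := by
    have hpoly : HasDerivAt (fun t : ℝ => ‖ys‖ ^ 2 + 2 * ⟪ys, v⟫ * t + ‖v‖ ^ 2 * t ^ 2)
        (2 * ⟪ys, v⟫ + ‖v‖ ^ 2 * (2 * 0 ^ 1)) 0 := by
      exact (((hasDerivAt_id (0:ℝ)).const_mul (2 * ⟪ys, v⟫)).const_add (‖ys‖^2)).add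
        ((hasDerivAt_pow 2 (0:ℝ)).const_mul (‖v‖^2)) |>.congr_deriv (by ring)
    have := hpoly.const_mul (μ / 2)
    have heq : (fun t => (μ / 2) * ‖c t‖ ^ 2)
        = fun t : ℝ => (μ / 2) * (‖ys‖ ^ 2 + 2 * ⟪ys, v⟫ * t + ‖v‖ ^ 2 * t ^ 2) := by
      funext t; rw [hnorm t]
    rw [heq]
    exact this.congr_deriv (by ring)
  have hφderiv : HasDerivAt φ (μ * ⟪ys, v⟫) 0 := by
    have := h1.add h2
    rw [zero_add] at this
    exact this
  -- concavity of φ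
  have hφconc : ConcaveOn ℝ Set.univ φ := by
    have := hconc.comp_affineMap
      (AffineMap.lineMap ys (ys + v) : ℝ →ᵃ[ℝ] EuclideanSpace ℝ (Fin d))
    have heq : (fun y => g y + (μ / 2) * ‖y‖ ^ 2) ∘
        (AffineMap.lineMap ys (ys + v) : ℝ →ᵃ[ℝ] EuclideanSpace ℝ (Fin d)) = φ := by
      funext t
      simp only [Function.comp_apply, AffineMap.lineMap_apply, vsub_eq_sub, vadd_eq_add,
        add_sub_cancel_left, hφ, hc]
      rw [add_comm (t • v) ys]
    rw [heq] at this
    simpa using this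
  have hslope : slope φ 0 1 ≤ μ * ⟪ys, v⟫ :=
    hφconc.slope_le_of_hasDerivAt (Set.mem_univ 0) (Set.mem_univ 1) one_pos hφderiv
  have hφ0 : φ 0 = g ys + (μ / 2) * ‖ys‖ ^ 2 := by simp [hφ, hc]
  have hφ1 : φ 1 = g y + (μ / 2) * ‖y‖ ^ 2 := by
    simp [hφ, hc, hv]
  rw [slope_def_field] at hslope
  have key : g y + (μ / 2) * ‖y‖ ^ 2 - (g ys + (μ / 2) * ‖ys‖ ^ 2) ≤ μ * ⟪ys, v⟫ := by
    have h := hslope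
    rw [hφ0, hφ1] at h
    linarith [h]
  -- expand norms
  have hexp : ‖v‖ ^ 2 = ‖y‖ ^ 2 - 2 * ⟪ys, y⟫ + ‖ys‖ ^ 2 := by
    rw [hv, norm_sub_sq_real y ys, real_inner_comm]
  have hip : ⟪ys, v⟫ = ⟪ys, y⟫ - ‖ys‖ ^ 2 := by
    rw [hv, inner_sub_right, real_inner_self_eq_norm_sq]
  rw [hip] at key
  show g y + (μ / 2) * ‖v‖ ^ 2 ≤ g ys
  rw [hexp]
  nlinarith [key]

theorem gradx_bound_via_Phi {d : ℕ} (l μ : ℝ) (hl : 0 < l) (hμ : 0 < μ)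
    (f : EuclideanSpace ℝ (Fin d) → EuclideanSpace ℝ (Fin d) → ℝ)
    (hdx : ∀ y, Differentiable ℝ (fun x => f x y))
    (hdy : ∀ x, Differentiable ℝ (f x))
    (hsmooth_x : ∀ x₁ y₁ x₂ y₂,
      ‖gradx f x₁ y₁ - gradx f x₂ y₂‖ ≤ l * (‖x₁ - x₂‖ + ‖y₁ - y₂‖))
    (hsmooth_y : ∀ x₁ y₁ x₂ y₂,
      ‖grady f x₁ y₁ - grady f x₂ y₂‖ ≤ l * (‖x₁ - x₂‖ + ‖y₁ - y₂‖))
    (hconc : ∀ x, ConcaveOn ℝ Set.univ (fun y => f x y + (μ / 2) * ‖y‖ ^ 2))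
    (ystar : EuclideanSpace ℝ (Fin d) → EuclideanSpace ℝ (Fin d))
    (hmax : ∀ x, IsMaxOn (f x) Set.univ (ystar x))
    (Φ : EuclideanSpace ℝ (Fin d) → ℝ) (hΦ : ∀ x, Φ x = f x (ystar x))
    (hgradΦ : ∀ x, HasGradientAt Φ (gradx f x (ystar x)) x) :
    ∀ x y, ‖gradx f x y‖ ^ 2 ≤
      2 * ‖gradient Φ x‖ ^ 2 + 4 * l * (l / μ) * (Φ x - f x y) := by
  intro x y
  have hgrad : gradient Φ x = gradx f x (ystar x) := (hgradΦ x).gradient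
  set G := gradx f x y
  set Gs := gradx f x (ystar x)
  have hlip : ‖G - Gs‖ ≤ l * ‖y - ystar x‖ := by
    have := hsmooth_x x y x (ystar x)
    simpa using this
  have htri : ‖G‖ ≤ ‖Gs‖ + ‖G - Gs‖ := by
    calc ‖G‖ = ‖Gs + (G - Gs)‖ := by rw [add_sub_cancel]
    _ ≤ ‖Gs‖ + ‖G - Gs‖ := norm_add_le _ _
  have hqg : f x y + (μ / 2) * ‖y - ystar x‖ ^ 2 ≤ f x (ystar x) :=
    quad_growth μ (f x) (hdy x) (hconc x) (ystar x) (hmax x) y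
  rw [hgrad, hΦ x]
  have hA : ‖G‖ ^ 2 ≤ (‖Gs‖ + ‖G - Gs‖) ^ 2 := pow_le_pow_left₀ (norm_nonneg G) htri 2
  have hB : ‖G - Gs‖ ^ 2 ≤ (l * ‖y - ystar x‖) ^ 2 :=
    pow_le_pow_left₀ (norm_nonneg _) hlip 2
  have h1 : ‖G‖ ^ 2 ≤ 2 * ‖Gs‖ ^ 2 + 2 * (l * ‖y - ystar x‖) ^ 2 := by
    nlinarith [hA, hB, sq_nonneg (‖Gs‖ - ‖G - Gs‖)]
  have h2 : 2 * (l * ‖y - ystar x‖) ^ 2 ≤ 4 * l * (l / μ) * (f x (ystar x) - f x y) := by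
    have h3 : (μ / 2) * ‖y - ystar x‖ ^ 2 ≤ f x (ystar x) - f x y := by linarith
    have h4 : 4 * l * (l / μ) * ((μ / 2) * ‖y - ystar x‖ ^ 2)
        ≤ 4 * l * (l / μ) * (f x (ystar x) - f x y) := by
      apply mul_le_mul_of_nonneg_left h3
      positivity
    calc 2 * (l * ‖y - ystar x‖) ^ 2
        = 4 * l * (l / μ) * ((μ / 2) * ‖y - ystar x‖ ^ 2) := by
          field_simp; ring
    _ ≤ _ := h4
  linarith
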